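/- Let λ be a partition of n ≥ 2 and q = λ₁/n. Then c_{λ'} ≥ min{1/4, (1−q)/2}, where c_{λ'} = (1/2)[1 + Σᵢ λ'ᵢ(λ'ᵢ−1)/(n(n−1)) − Σᵢ λᵢ(λᵢ−1)/(n(n−1))]. -/

import Mathlib

open Finset

/-- `c_{λ'} = (1/2)[1 + Σᵢ λ'ᵢ(λ'ᵢ−1)/(n(n−1)) − Σᵢ λᵢ(λᵢ−1)/(n(n−1))]`, where
`λᵢ = μ.rowLen i`, `λ'ᵢ = μ.colLen i` and `n = μ.card`. -/
noncomputable def cB (μ : YoungDiagram) : ℝ :=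
  (1 / 2) *
    (1 + (∑ i ∈ Finset.range μ.card, (μ.colLen i : ℝ) * ((μ.colLen i : ℝ) - 1)) /
        (μ.card * ((μ.card : ℝ) - 1))
      - (∑ i ∈ Finset.range μ.card, (μ.rowLen i : ℝ) * ((μ.rowLen i : ℝ) - 1)) /
        (μ.card * ((μ.card : ℝ) - 1)))

lemma colLen_zero_le_card (μ : YoungDiagram) : μ.colLen 0 ≤ μ.card := by
  rw [YoungDiagram.colLen_eq_card]
  exact Finset.card_le_card (Finset.filter_subset _ _)

lemma sum_rowLen_eq_card (μ : YoungDiagram) {k : ℕ} (hk : μ.colLen 0 ≤ k) :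
    ∑ i ∈ Finset.range k, μ.rowLen i = μ.card := by
  have hcells : μ.cells = (Finset.range k).biUnion μ.row := by
    ext ⟨i, j⟩
    simp only [Finset.mem_biUnion, Finset.mem_range, YoungDiagram.mem_row_iff]
    constructor
    · intro h
      refine ⟨i, ?_, ?_, rfl⟩
      · have h0 : (i, 0) ∈ μ := μ.up_left_mem le_rfl (Nat.zero_le _) h
        have := YoungDiagram.mem_iff_lt_colLen.mp h0
        omega
      · exact h
    · rintro ⟨a, _, hmem, rfl⟩
      exact hmem
  have : μ.card = ∑ i ∈ Finset.range k, (μ.row i).card := by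
    rw [show μ.card = μ.cells.card from rfl, hcells]
    apply Finset.card_biUnion
    intro x _ y _ hxy
    rw [Function.onFun, Finset.disjoint_left]
    intro c hc hc'
    rw [YoungDiagram.mem_row_iff] at hc hc'
    exact hxy (hc.2 ▸ hc'.2 ▸ rfl)
  rw [this]
  exact Finset.sum_congr rfl fun i _ => (μ.rowLen_eq_card ▸ rfl)

/-- `c_{λ'} ≥ min{1/4, (1−q)/2}` where `q = λ₁/n`. -/
theorem c_conj_min_lower_bound (μ : YoungDiagram) (n : ℕ) (hn : μ.card = n) (h2 : 2 ≤ n)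
    (q : ℝ) (hq : q = (μ.rowLen 0 : ℝ) / n) :
    min (1 / 4 : ℝ) ((1 - q) / 2) ≤ cB μ := by
  refine le_trans (min_le_right _ _) ?_
  have hsumN : ∑ i ∈ Finset.range n, μ.rowLen i = n := by
    rw [sum_rowLen_eq_card μ (hn ▸ colLen_zero_le_card μ), hn]
  set nR : ℝ := (n : ℝ) with hnR
  have hnR2 : (2 : ℝ) ≤ nR := by rw [hnR]; exact_mod_cast h2
  set LR : ℝ := (μ.rowLen 0 : ℝ) with hLR
  have hLR0 : 0 ≤ LR := Nat.cast_nonneg _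
  have hsum : ∑ i ∈ Finset.range n, (μ.rowLen i : ℝ) = nR := by
    rw [hnR]
    exact_mod_cast congrArg (Nat.cast : ℕ → ℝ) hsumN
  have hLn : LR ≤ nR := by
    rw [← hsum]
    exact Finset.single_le_sum (f := fun i => (μ.rowLen i : ℝ))
      (fun i _ => Nat.cast_nonneg _) (Finset.mem_range.mpr (by omega))
  set A : ℝ := ∑ i ∈ Finset.range μ.card, (μ.colLen i : ℝ) * ((μ.colLen i : ℝ) - 1) with hA
  set B : ℝ := ∑ i ∈ Finset.range μ.card, (μ.rowLen i : ℝ) * ((μ.rowLen i : ℝ) - 1) with hB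
  have hA0 : 0 ≤ A := by
    apply Finset.sum_nonneg
    intro i _
    rcases Nat.eq_zero_or_pos (μ.colLen i) with h | h
    · simp [h]
    · have : (1 : ℝ) ≤ (μ.colLen i : ℝ) := by exact_mod_cast h
      nlinarith
  have hBle : B ≤ (LR - 1) * nR := by
    rw [hB, hn, ← hsum, Finset.mul_sum]
    apply Finset.sum_le_sum
    intro i _
    have h1 : (μ.rowLen i : ℝ) ≤ LR := by
      rw [hLR]; exact_mod_cast μ.rowLen_anti 0 i (Nat.zero_le _)
    have h2 : (0 : ℝ) ≤ (μ.rowLen i : ℝ) := Nat.cast_nonneg _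
    nlinarith
  set D : ℝ := nR * (nR - 1) with hD
  have hDpos : 0 < D := by rw [hD]; nlinarith
  have h1 : B / D ≤ (LR - 1) / (nR - 1) := by
    rw [div_le_div_iff₀ hDpos (by linarith)]
    nlinarith
  have h2' : 0 ≤ A / D := div_nonneg hA0 hDpos.le
  have h4 : (LR - 1) / (nR - 1) ≤ LR / nR := by
    rw [div_le_div_iff₀ (by linarith) (by linarith)]
    nlinarith
  have hcB : cB μ = (1 / 2) * (1 + A / D - B / D) := by
    rw [cB, hA, hB, hD, hnR, hn]
  rw [hcB, hq]
  linarith
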